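/- The quotient algebra k[x₁,…,x_r]/⟨x_i^{m_i} (all i), x_i x_j (i ≠ j)⟩ determines the multiset {m_1,…,m_r} of exponents with m_i ≥ 2: if two such algebras k[x₁,…,x_r]/⟨x_i^{m_i}, x_i x_j⟩ and k[y₁,…,y_s]/⟨y_j^{n_j}, y_i y_j⟩ with all m_i, n_j ≥ 2 are isomorphic as k-algebras, then r = s and the multisets {m_i} and {n_j} coincide. -/

import Mathlib

open MvPolynomial

/-- The ideal of `k[x₁,…,x_r]` generated by `x_i^{m_i}` (all `i`) and `x_i x_j` (`i ≠ j`). -/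
noncomputable def monIdeal (k : Type*) [Field k] (r : ℕ) (m : Fin r → ℕ) :
    Ideal (MvPolynomial (Fin r) k) :=
  Ideal.span ({p | ∃ i, p = X i ^ m i} ∪ {p | ∃ i j, i ≠ j ∧ p = X i * X j})

open Pointwise

set_option synthInstance.maxHeartbeats 1000000
set_option maxHeartbeats 1000000

namespace Stmt7Aux

variable {σ : Type*} {k : Type*} [Field k]

lemma degree_add (a b : σ →₀ ℕ) :
    Finsupp.degree (a + b) = Finsupp.degree a + Finsupp.degree b := by
  simp [Finsupp.degree_eq_weight_one, map_add]

lemma degree_single (i : σ) (u : ℕ) : Finsupp.degree (Finsupp.single i u) = u := by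
  simp [Finsupp.degree_eq_weight_one, Finsupp.weight_apply, Finsupp.sum_single_index]

lemma degree_mono {a b : σ →₀ ℕ} (h : a ≤ b) : Finsupp.degree a ≤ Finsupp.degree b := by
  have : b - a + a = b := tsub_add_cancel_of_le h
  calc Finsupp.degree a ≤ Finsupp.degree (b - a) + Finsupp.degree a := Nat.le_add_left _ _
  _ = Finsupp.degree b := by rw [← degree_add, this]

lemma exists_le_degree {d : σ →₀ ℕ} {t : ℕ} (h : t ≤ Finsupp.degree d) :
    ∃ s, s ≤ d ∧ Finsupp.degree s = t := by
  induction t with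
  | zero => exact ⟨0, zero_le, map_zero _⟩
  | succ t ih =>
    obtain ⟨s, hs, hds⟩ := ih (Nat.le_of_succ_le h)
    have hne : s ≠ d := by rintro rfl; omega
    have : ∃ i, s i < d i := by
      by_contra hc
      push_neg at hc
      exact hne (le_antisymm hs (Finsupp.le_def.mpr hc))
    obtain ⟨i, hi⟩ := this
    refine ⟨s + Finsupp.single i 1, ?_, by rw [degree_add, degree_single, hds]⟩
    rw [Finsupp.le_def]
    intro j
    rcases eq_or_ne j i with rfl | hj
    · simp only [Finsupp.add_apply, Finsupp.single_eq_same]; omega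
    · rw [Finsupp.add_apply, Finsupp.single_eq_of_ne' (Ne.symm hj), add_zero]
      exact hs j


lemma span_monomial_mul (A B : Set (σ →₀ ℕ)) :
    Ideal.span ((fun s => MvPolynomial.monomial s (1 : k)) '' A) *
      Ideal.span ((fun s => MvPolynomial.monomial s (1 : k)) '' B)
      = Ideal.span ((fun s => MvPolynomial.monomial s (1 : k)) '' (A + B)) := by
  rw [Ideal.span_mul_span']
  congr 1
  ext p
  constructor
  · rintro ⟨_, ⟨a, ha, rfl⟩, _, ⟨b, hb, rfl⟩, rfl⟩
    exact ⟨a + b, ⟨a, ha, b, hb, rfl⟩, by simp [monomial_mul]⟩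
  · rintro ⟨_, ⟨a, ha, b, hb, rfl⟩, rfl⟩
    exact ⟨_, ⟨a, ha, rfl⟩, _, ⟨b, hb, rfl⟩, by simp [monomial_mul]⟩

lemma span_X_eq :
    Ideal.span (Set.range (X : σ → MvPolynomial σ k)) =
      Ideal.span ((fun s => MvPolynomial.monomial s (1 : k)) ''
        (Set.range fun i : σ => Finsupp.single i 1)) := by
  congr 1
  ext p
  constructor
  · rintro ⟨i, rfl⟩
    exact ⟨Finsupp.single i 1, ⟨i, rfl⟩, rfl⟩
  · rintro ⟨_, ⟨i, rfl⟩, rfl⟩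
    exact ⟨i, rfl⟩

lemma degree_set_add (t : ℕ) :
    {d : σ →₀ ℕ | Finsupp.degree d = t} + (Set.range fun i : σ => Finsupp.single i 1)
      = {d : σ →₀ ℕ | Finsupp.degree d = t + 1} := by
  ext d
  constructor
  · rintro ⟨a, ha, _, ⟨i, rfl⟩, rfl⟩
    simp only [Set.mem_setOf_eq, degree_add, degree_single]
    simp only [Set.mem_setOf_eq] at ha
    omega
  · intro hd
    simp only [Set.mem_setOf_eq] at hd
    have hd0 : d ≠ 0 := by
      intro h
      rw [h, map_zero] at hd
      omega
    obtain ⟨i, hi⟩ := Finsupp.support_nonempty_iff.mpr hd0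
    have hle : Finsupp.single i 1 ≤ d := by
      rw [Finsupp.single_le_iff]
      exact Nat.one_le_iff_ne_zero.mpr (Finsupp.mem_support_iff.mp hi)
    refine ⟨d - Finsupp.single i 1, ?_, Finsupp.single i 1, ⟨i, rfl⟩,
      tsub_add_cancel_of_le hle⟩
    have := degree_add (d - Finsupp.single i 1) (Finsupp.single i 1)
    rw [tsub_add_cancel_of_le hle, degree_single] at this
    simp only [Set.mem_setOf_eq] at hd ⊢
    omega

lemma span_X_pow (t : ℕ) :
    (Ideal.span (Set.range (X : σ → MvPolynomial σ k))) ^ t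
      = Ideal.span ((fun s => MvPolynomial.monomial s (1 : k)) ''
          {d | Finsupp.degree d = t}) := by
  induction t with
  | zero =>
    rw [pow_zero]
    have : {d : σ →₀ ℕ | Finsupp.degree d = 0} = {0} := by
      ext d; simp [Finsupp.degree_eq_zero_iff]
    rw [this, Set.image_singleton]
    have : (MvPolynomial.monomial (0 : σ →₀ ℕ)) (1 : k) = 1 := by
      simp [MvPolynomial.monomial_zero']
    rw [this, Ideal.span_singleton_one, Ideal.one_eq_top]
  | succ t ih =>
    rw [pow_succ, ih, span_X_eq, span_monomial_mul, degree_set_add]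


theorem finrank_quot_monomial_span (S : Set (σ →₀ ℕ)) (G : Finset (σ →₀ ℕ))
    (hG : ∀ d, d ∈ G ↔ ¬ ∃ s ∈ S, s ≤ d) :
    Module.finrank k
      (MvPolynomial σ k ⧸ Ideal.span ((fun s => MvPolynomial.monomial s (1 : k)) '' S))
      = G.card := by
  classical
  set I := Ideal.span ((fun s => MvPolynomial.monomial s (1 : k)) '' S) with hIdef
  have hGood : (↑G : Set (σ →₀ ℕ)) = {d | ∃ s ∈ S, s ≤ d}ᶜ := by
    ext d; simpa using hG d
  have hrs : I.restrictScalars k = MvPolynomial.restrictSupport k {d | ∃ s ∈ S, s ≤ d} := by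
    ext p
    rw [Submodule.restrictScalars_mem, hIdef, MvPolynomial.mem_ideal_span_monomial_image,
      MvPolynomial.restrictSupport, AddMonoidAlgebra.mem_supported]
    exact Iff.rfl
  have hcompl : IsCompl (MvPolynomial.restrictSupport k {d | ∃ s ∈ S, s ≤ d})
      (MvPolynomial.restrictSupport k (↑G : Set (σ →₀ ℕ))) := by
    rw [hGood]
    constructor
    · rw [MvPolynomial.restrictSupport, MvPolynomial.restrictSupport,
        AddMonoidAlgebra.supported_eq_map, AddMonoidAlgebra.supported_eq_map]
      exact (Finsupp.disjoint_supported_supported disjoint_compl_right).map_orderIso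
        (Submodule.orderIsoMapComap _)
    · rw [codisjoint_iff]
      rw [MvPolynomial.restrictSupport, MvPolynomial.restrictSupport,
        AddMonoidAlgebra.supported_eq_map, AddMonoidAlgebra.supported_eq_map, ← Submodule.map_sup,
        ← Finsupp.supported_union, Set.union_compl_self, Finsupp.supported_univ, Submodule.map_top,
        LinearEquiv.range]
  have e1 : (MvPolynomial σ k ⧸ I) ≃ₗ[k] (MvPolynomial σ k ⧸ (I.restrictScalars k)) :=
    (Submodule.Quotient.restrictScalarsEquiv k I).symm
  have e2 : (MvPolynomial σ k ⧸ (I.restrictScalars k)) ≃ₗ[k]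
      MvPolynomial.restrictSupport k (↑G : Set (σ →₀ ℕ)) := by
    rw [hrs]
    exact Submodule.quotientEquivOfIsCompl _ _ hcompl
  rw [e1.finrank_eq, e2.finrank_eq,
    Module.finrank_eq_card_basis (MvPolynomial.basisRestrictSupport k (↑G : Set (σ →₀ ℕ))),
    ]
  simp


lemma X_eq (i : σ) : (X i : MvPolynomial σ k) = monomial (Finsupp.single i 1) 1 := by
  rw [← pow_one (X i : MvPolynomial σ k), X_pow_eq_monomial]

section Concrete


variable {r : ℕ}

def E0 (r : ℕ) (m : Fin r → ℕ) : Set (Fin r →₀ ℕ) :=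
  {d | ∃ i, d = Finsupp.single i (m i)} ∪
    {d | ∃ i j, i ≠ j ∧ d = Finsupp.single i 1 + Finsupp.single j 1}

lemma monIdeal_eq (m : Fin r → ℕ) :
    monIdeal k r m = Ideal.span ((fun s => MvPolynomial.monomial s (1 : k)) '' E0 r m) := by
  unfold monIdeal E0
  congr 1
  rw [Set.image_union]
  apply congrArg₂ Set.union
  · ext p
    constructor
    · rintro ⟨i, rfl⟩
      exact ⟨Finsupp.single i (m i), ⟨i, rfl⟩, (X_pow_eq_monomial).symm⟩
    · rintro ⟨_, ⟨i, rfl⟩, rfl⟩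
      exact ⟨i, X_pow_eq_monomial.symm⟩
  · ext p
    constructor
    · rintro ⟨i, j, hij, rfl⟩
      exact ⟨_, ⟨i, j, hij, rfl⟩, by rw [X_eq, X_eq, monomial_mul, one_mul]⟩
    · rintro ⟨_, ⟨i, j, hij, rfl⟩, rfl⟩
      exact ⟨i, j, hij, by rw [X_eq, X_eq, monomial_mul, one_mul]⟩

lemma pair_le_iff {i j : Fin r} (hij : i ≠ j) (d : Fin r →₀ ℕ) :
    Finsupp.single i 1 + Finsupp.single j 1 ≤ d ↔ 1 ≤ d i ∧ 1 ≤ d j := by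
  rw [Finsupp.le_def]
  constructor
  · intro h
    have hi := h i
    have hj := h j
    rw [Finsupp.add_apply, Finsupp.single_eq_same, Finsupp.single_eq_of_ne' (Ne.symm hij),
      add_zero] at hi
    rw [Finsupp.add_apply, Finsupp.single_eq_same, Finsupp.single_eq_of_ne' hij, zero_add] at hj
    exact ⟨hi, hj⟩
  · rintro ⟨h1, h2⟩ l
    rw [Finsupp.add_apply, Finsupp.single_apply, Finsupp.single_apply]
    rcases eq_or_ne i l with rfl | hil
    · rw [if_pos rfl, if_neg (by exact fun h => hij h.symm)]
      omega
    · rw [if_neg hil]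
      rcases eq_or_ne j l with rfl | hjl
      · rw [if_pos rfl]; omega
      · rw [if_neg hjl]; omega

noncomputable def goodFinset (m : Fin r → ℕ) (t : ℕ) : Finset (Fin r →₀ ℕ) :=
  insert 0 (Finset.univ.biUnion fun i =>
    (Finset.Ico 1 (min (m i) t)).image fun u => Finsupp.single i u)

lemma mem_goodFinset (m : Fin r → ℕ) (hm1 : ∀ i, 1 ≤ m i) (t : ℕ) (ht : 1 ≤ t)
    (d : Fin r →₀ ℕ) :
    d ∈ goodFinset m t ↔ ¬ ∃ s ∈ E0 r m ∪ {e | Finsupp.degree e = t}, s ≤ d := by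
  have memA : ∀ i : Fin r, Finsupp.single i (m i) ∈ E0 r m ∪ {e | Finsupp.degree e = t} :=
    fun i => Or.inl (Or.inl ⟨i, rfl⟩)
  have memB : ∀ i j : Fin r, i ≠ j →
      Finsupp.single i 1 + Finsupp.single j 1 ∈ E0 r m ∪ {e | Finsupp.degree e = t} :=
    fun i j hij => Or.inl (Or.inr ⟨i, j, hij, rfl⟩)
  have memC : ∀ s : Fin r →₀ ℕ, Finsupp.degree s = t →
      s ∈ E0 r m ∪ {e | Finsupp.degree e = t} := fun s hs => Or.inr hs
  rw [goodFinset, Finset.mem_insert]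
  constructor
  · rintro (rfl | hd)
    · rintro ⟨s, hs, hle⟩
      have hs0 : s = 0 := by
        ext l
        have := Finsupp.le_def.mp hle l
        simpa using this
      subst hs0
      rcases hs with (⟨i, h⟩ | ⟨i, j, hij, h⟩) | h
      · have := hm1 i
        rw [eq_comm, Finsupp.single_eq_zero] at h
        omega
      · have := congrArg (fun f : Fin r →₀ ℕ => f i) h
        simp only [Finsupp.coe_zero, Pi.zero_apply, Finsupp.add_apply,
          Finsupp.single_eq_same, Finsupp.single_eq_of_ne' (Ne.symm hij), add_zero] at this
        omega
      · simp only [Set.mem_setOf_eq, map_zero] at h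
        omega
    · simp only [Finset.mem_biUnion, Finset.mem_image, Finset.mem_Ico] at hd
      obtain ⟨i, -, u, ⟨hu1, hu2⟩, rfl⟩ := hd
      rintro ⟨s, hs, hle⟩
      rcases hs with (⟨i', rfl⟩ | ⟨i', j', hij, rfl⟩) | hdeg
      · rw [Finsupp.single_le_iff] at hle
        rcases eq_or_ne i' i with rfl | hne
        · rw [Finsupp.single_eq_same] at hle; omega
        · rw [Finsupp.single_eq_of_ne' (Ne.symm hne)] at hle
          have := hm1 i'
          omega
      · rw [pair_le_iff hij] at hle
        obtain ⟨h1, h2⟩ := hle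
        rcases eq_or_ne i i' with rfl | hne
        · rw [Finsupp.single_eq_of_ne' hij] at h2
          omega
        · rw [Finsupp.single_eq_of_ne' hne] at h1
          omega
      · simp only [Set.mem_setOf_eq] at hdeg
        have := degree_mono hle
        rw [hdeg, degree_single] at this
        omega
  · intro hgood
    push_neg at hgood
    by_cases hd0 : d = 0
    · exact Or.inl hd0
    right
    obtain ⟨i, hi⟩ := Finsupp.support_nonempty_iff.mpr hd0
    have hdi : d i ≠ 0 := Finsupp.mem_support_iff.mp hi
    have hsingle : d = Finsupp.single i (d i) := by
      ext j
      rcases eq_or_ne j i with rfl | hj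
      · rw [Finsupp.single_eq_same]
      · rw [Finsupp.single_eq_of_ne' (Ne.symm hj)]
        by_contra hdj
        exact hgood _ (memB j i hj) ((pair_le_iff hj d).mpr ⟨by omega, by omega⟩)
    have h1 : ¬ m i ≤ d i := by
      have := hgood _ (memA i)
      rwa [Finsupp.single_le_iff] at this
    have h2 : Finsupp.degree d < t := by
      by_contra hc
      push_neg at hc
      obtain ⟨s, hsle, hsdeg⟩ := exists_le_degree hc
      exact hgood s (memC s hsdeg) hsle
    have h3 : Finsupp.degree d = d i := by
      have := degree_single i (d i)
      rw [← hsingle] at this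
      exact this
    exact Finset.mem_biUnion.mpr ⟨i, Finset.mem_univ i, Finset.mem_image.mpr
      ⟨d i, Finset.mem_Ico.mpr ⟨by omega, by omega⟩, hsingle.symm⟩⟩

lemma goodFinset_card (m : Fin r → ℕ) (t : ℕ) :
    (goodFinset m t).card = 1 + ∑ i, (min (m i) t - 1) := by
  have h0 : (0 : Fin r →₀ ℕ) ∉ Finset.univ.biUnion fun i : Fin r =>
      (Finset.Ico 1 (min (m i) t)).image fun u => Finsupp.single i u := by
    simp only [Finset.mem_biUnion, Finset.mem_image, Finset.mem_Ico]
    rintro ⟨i, -, u, ⟨hu1, -⟩, hu⟩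
    rw [Finsupp.single_eq_zero] at hu
    omega
  have hdisj : ∀ i ∈ Finset.univ, ∀ j ∈ Finset.univ, i ≠ j →
      Disjoint ((Finset.Ico 1 (min (m i) t)).image fun u => Finsupp.single i u)
        ((Finset.Ico 1 (min (m j) t)).image fun u => Finsupp.single j u) := by
    intro i _ j _ hij
    rw [Finset.disjoint_left]
    rintro a ha hb
    simp only [Finset.mem_image, Finset.mem_Ico] at ha hb
    obtain ⟨u, ⟨hu1, -⟩, rfl⟩ := ha
    obtain ⟨v, ⟨hv1, -⟩, hv⟩ := hb
    have h := congrArg (fun f : Fin r →₀ ℕ => f i) hv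
    simp only [Finsupp.single_eq_same, Finsupp.single_eq_of_ne' (Ne.symm hij)] at h
    omega
  rw [goodFinset, Finset.card_insert_of_notMem h0, Finset.card_biUnion hdisj, add_comm]
  congr 1
  apply Finset.sum_congr rfl
  intro i _
  rw [Finset.card_image_of_injective _ (Finsupp.single_injective i), Nat.card_Ico]

lemma dim_formula (m : Fin r → ℕ) (hm1 : ∀ i, 1 ≤ m i) (t : ℕ) (ht : 1 ≤ t) :
    Module.finrank k (MvPolynomial (Fin r) k ⧸
        (monIdeal k r m ⊔ (Ideal.span (Set.range (X : Fin r → MvPolynomial (Fin r) k))) ^ t))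
      = 1 + ∑ i, (min (m i) t - 1) := by
  have h : monIdeal k r m ⊔ (Ideal.span (Set.range (X : Fin r → MvPolynomial (Fin r) k))) ^ t
      = Ideal.span ((fun s => MvPolynomial.monomial s (1 : k)) ''
          (E0 r m ∪ {d | Finsupp.degree d = t})) := by
    rw [monIdeal_eq, span_X_pow, Set.image_union, Ideal.span_union]
  rw [h, finrank_quot_monomial_span _ (goodFinset m t)
    (fun d => mem_goodFinset m hm1 t ht d), goodFinset_card]

lemma nilradical_eq (m : Fin r → ℕ) (hm1 : ∀ i, 1 ≤ m i) :
    nilradical (MvPolynomial (Fin r) k ⧸ monIdeal k r m)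
      = (Ideal.span (Set.range (X : Fin r → MvPolynomial (Fin r) k))).map
          (Ideal.Quotient.mk (monIdeal k r m)) := by
  have hIP : monIdeal k r m ≤
      Ideal.span (Set.range (X : Fin r → MvPolynomial (Fin r) k)) := by
    rw [monIdeal, Ideal.span_le]
    rintro p (⟨i, rfl⟩ | ⟨i, j, hij, rfl⟩)
    · exact Ideal.pow_mem_of_mem _ (Ideal.subset_span (Set.mem_range_self i)) _ (hm1 i)
    · exact Ideal.mul_mem_left _ _ (Ideal.subset_span (Set.mem_range_self j))
  apply le_antisymm
  · have hker : RingHom.ker (constantCoeff : MvPolynomial (Fin r) k →+* k)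
        = Ideal.span (Set.range (X : Fin r → MvPolynomial (Fin r) k)) := by
      ext p
      rw [RingHom.mem_ker]
      have h1 := span_X_pow (σ := Fin r) (k := k) 1
      rw [pow_one] at h1
      rw [h1, MvPolynomial.mem_ideal_span_monomial_image]
      constructor
      · intro h d hd
        have hd0 : d ≠ 0 := by
          intro hh
          rw [hh] at hd
          rw [MvPolynomial.mem_support_iff] at hd
          exact hd h
        have hdeg : 1 ≤ Finsupp.degree d :=
          Nat.one_le_iff_ne_zero.mpr (fun hh => hd0 ((Finsupp.degree_eq_zero_iff d).mp hh))
        obtain ⟨s, hsle, hsdeg⟩ := exists_le_degree hdeg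
        exact ⟨s, hsdeg, hsle⟩
      · intro h
        by_contra h0
        have h0' : (0 : Fin r →₀ ℕ) ∈ p.support := by
          rw [MvPolynomial.mem_support_iff]
          intro hc
          exact h0 hc
        obtain ⟨s, hs1, hsle⟩ := h 0 h0'
        have := degree_mono hsle
        rw [map_zero] at this
        simp only [Set.mem_setOf_eq] at hs1
        omega
    have hsurj : Function.Surjective (constantCoeff : MvPolynomial (Fin r) k →+* k) :=
      fun x => ⟨C x, by simp⟩
    have e2 : (MvPolynomial (Fin r) k ⧸
        Ideal.span (Set.range (X : Fin r → MvPolynomial (Fin r) k))) ≃+* k := by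
      rw [← hker]
      exact RingHom.quotientKerEquivOfSurjective hsurj
    have e1 := DoubleQuot.quotQuotEquivQuotOfLE hIP
    have hfield : IsField ((MvPolynomial (Fin r) k ⧸ monIdeal k r m) ⧸
        (Ideal.span (Set.range (X : Fin r → MvPolynomial (Fin r) k))).map
          (Ideal.Quotient.mk (monIdeal k r m))) :=
      (e1.trans e2).toMulEquiv.isField (Field.toIsField k)
    have hmax := Ideal.Quotient.maximal_of_isField _ hfield
    haveI := hmax.isPrime
    exact nilradical_le_prime _
  · rw [Ideal.map_span, Ideal.span_le]
    rintro q ⟨p, ⟨i, rfl⟩, rfl⟩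
    refine mem_nilradical.mpr ⟨m i, ?_⟩
    rw [← map_pow, Ideal.Quotient.eq_zero_iff_mem]
    exact Ideal.subset_span (Set.mem_union_left _ ⟨i, rfl⟩)

lemma finrank_nilpow (m : Fin r → ℕ) (hm1 : ∀ i, 1 ≤ m i) (t : ℕ) (ht : 1 ≤ t) :
    Module.finrank k ((MvPolynomial (Fin r) k ⧸ monIdeal k r m)
        ⧸ (nilradical (MvPolynomial (Fin r) k ⧸ monIdeal k r m)) ^ t)
      = 1 + ∑ i, (min (m i) t - 1) := by
  have h1 : (nilradical (MvPolynomial (Fin r) k ⧸ monIdeal k r m)) ^ t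
      = (monIdeal k r m ⊔ (Ideal.span (Set.range (X : Fin r → MvPolynomial (Fin r) k))) ^ t).map
          (Ideal.Quotient.mk (monIdeal k r m)) := by
    rw [nilradical_eq m hm1, ← Ideal.map_pow, Ideal.map_sup, Ideal.map_quotient_self, bot_sup_eq]
  rw [h1]
  have e := DoubleQuot.quotQuotEquivQuotOfLEₐ (R := k)
    (le_sup_left : monIdeal k r m ≤ monIdeal k r m ⊔
      (Ideal.span (Set.range (X : Fin r → MvPolynomial (Fin r) k))) ^ t)
  exact e.toLinearEquiv.finrank_eq.trans (dim_formula m hm1 t ht)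

end Concrete

lemma map_nilradical_equiv {A B : Type*} [CommRing A] [CommRing B] (f : A →+* B) (g : B →+* A)
    (hfg : Function.RightInverse g f) :
    (nilradical A).map f = nilradical B := by
  apply le_antisymm
  · rw [Ideal.map_le_iff_le_comap]
    intro x hx
    rw [Ideal.mem_comap]
    exact mem_nilradical.mpr ((mem_nilradical.mp hx).map f)
  · intro x hx
    have h1 : g x ∈ nilradical A := mem_nilradical.mpr ((mem_nilradical.mp hx).map g)
    have h2 := Ideal.mem_map_of_mem f h1
    rwa [hfg x] at h2

lemma finrank_nilquot_congr {A B : Type*} [CommRing A] [CommRing B] [Algebra k A] [Algebra k B]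
    (e : A ≃ₐ[k] B) (t : ℕ) :
    Module.finrank k (A ⧸ (nilradical A) ^ t) = Module.finrank k (B ⧸ (nilradical B) ^ t) := by
  have hmap : ((nilradical A) ^ t).map (e : A →+* B) = (nilradical B) ^ t := by
    rw [Ideal.map_pow, map_nilradical_equiv _ (e.symm : B →+* A)
      (fun b => e.apply_symm_apply b)]
  exact (Ideal.quotientEquivAlg ((nilradical A) ^ t) ((nilradical B) ^ t) e
    hmap.symm).toLinearEquiv.finrank_eq

lemma multiset_step (t : ℕ) (M : Multiset ℕ) (hM : ∀ x ∈ M, 2 ≤ x) (ht : 1 ≤ t) :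
    (M.map fun x => min x (t + 1) - 1).sum = (M.map fun x => min x t - 1).sum
      + M.countP (fun x => t < x) := by
  revert hM
  induction M using Multiset.induction_on with
  | empty => intro _; simp
  | cons a M ih =>
    intro hM
    have ha := hM a (Multiset.mem_cons_self a M)
    rw [Multiset.map_cons, Multiset.map_cons, Multiset.sum_cons, Multiset.sum_cons,
      Multiset.countP_cons, ih (fun x hx => hM x (Multiset.mem_cons_of_mem hx))]
    split_ifs with hcond <;> omega

lemma multiset_count (t : ℕ) (M : Multiset ℕ) :
    M.countP (fun x => t < x) = M.countP (fun x => t + 1 < x) + M.count (t + 1) := by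
  induction M using Multiset.induction_on with
  | empty => simp
  | cons a M ih =>
    rw [Multiset.countP_cons, Multiset.countP_cons, Multiset.count_cons, ih]
    split_ifs <;> omega

lemma multiset_eq (M N : Multiset ℕ) (hM : ∀ x ∈ M, 2 ≤ x) (hN : ∀ x ∈ N, 2 ≤ x)
    (h : ∀ t, 1 ≤ t → (M.map fun x => min x t - 1).sum = (N.map fun x => min x t - 1).sum) :
    M = N := by
  have hcnt : ∀ t, 1 ≤ t → M.countP (fun x => t < x) = N.countP (fun x => t < x) := by
    intro t ht
    have h1 := h t ht
    have h2 := h (t + 1) (by omega)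
    have sM := multiset_step t M hM ht
    have sN := multiset_step t N hN ht
    omega
  have hcard : Multiset.card M = Multiset.card N := by
    have h1 := hcnt 1 le_rfl
    rwa [Multiset.countP_eq_card.mpr (fun a ha => by have := hM a ha; omega),
      Multiset.countP_eq_card.mpr (fun a ha => by have := hN a ha; omega)] at h1
  have hcnt0 : ∀ t, M.countP (fun x => t < x) = N.countP (fun x => t < x) := by
    intro t
    rcases Nat.eq_zero_or_pos t with rfl | ht
    · rw [Multiset.countP_eq_card.mpr (fun a ha => by have := hM a ha; omega),
        Multiset.countP_eq_card.mpr (fun a ha => by have := hN a ha; omega), hcard]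
    · exact hcnt t ht
  rw [Multiset.ext]
  intro a
  rcases a with _ | t
  · rw [Multiset.count_eq_zero_of_notMem (fun hmem => by have := hM 0 hmem; omega),
      Multiset.count_eq_zero_of_notMem (fun hmem => by have := hN 0 hmem; omega)]
  · have c1 := multiset_count t M
    have c2 := multiset_count t N
    have e1 := hcnt0 t
    have e2 := hcnt0 (t + 1)
    omega

end Stmt7Aux

/-- The algebra `k[x₁,…,x_r]/⟨x_i^{m_i}, x_i x_j (i ≠ j)⟩` with all `m_i ≥ 2` determines the
multiset of exponents: if two such algebras are isomorphic, then `r = s` and the multisets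
of exponents coincide. -/
theorem stmt_7 (k : Type*) [Field k] (r s : ℕ) (m : Fin r → ℕ) (n : Fin s → ℕ)
    (hm : ∀ i, 2 ≤ m i) (hn : ∀ j, 2 ≤ n j)
    (h : Nonempty ((MvPolynomial (Fin r) k ⧸ monIdeal k r m) ≃ₐ[k]
        (MvPolynomial (Fin s) k ⧸ monIdeal k s n))) :
    r = s ∧ Finset.univ.val.map m = Finset.univ.val.map n := by
  obtain ⟨e⟩ := h
  have hm1 : ∀ i, 1 ≤ m i := fun i => le_trans one_le_two (hm i)
  have hn1 : ∀ j, 1 ≤ n j := fun j => le_trans one_le_two (hn j)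
  have key : ∀ t, 1 ≤ t →
      (1 + ∑ i, (min (m i) t - 1)) = (1 + ∑ j, (min (n j) t - 1)) := by
    intro t ht
    rw [← Stmt7Aux.finrank_nilpow (k := k) m hm1 t ht, ← Stmt7Aux.finrank_nilpow (k := k) n hn1 t ht]
    exact Stmt7Aux.finrank_nilquot_congr e t
  have hmult : Finset.univ.val.map m = Finset.univ.val.map n := by
    apply Stmt7Aux.multiset_eq
    · intro x hx
      obtain ⟨i, -, rfl⟩ := Multiset.mem_map.mp hx
      exact hm i
    · intro x hx
      obtain ⟨j, -, rfl⟩ := Multiset.mem_map.mp hx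
      exact hn j
    · intro t ht
      have hk := key t ht
      have hl : ((Finset.univ.val.map m).map fun x => min x t - 1).sum
          = ∑ i, (min (m i) t - 1) := by
        rw [Multiset.map_map]
        rfl
      have hr : ((Finset.univ.val.map n).map fun x => min x t - 1).sum
          = ∑ j, (min (n j) t - 1) := by
        rw [Multiset.map_map]
        rfl
      omega
  refine ⟨?_, hmult⟩
  have hcard := congrArg Multiset.card hmult
  simpa using hcard
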